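/- Let (M^{2n}, g, J) be a Kähler manifold of dimension 2n ≥ 4 and let (a_{ij}, λ_i) solve the h-projective equation a_{ij,k} = λ_i g_{jk} + λ_j g_{ik} − λ̄_i J_{jk} − λ̄_j J_{ik}. Then the vector field λ̄^i = g^{iα} J^β_α λ_β is a Killing vector field for g. -/

import Mathlib

open Matrix

private def hpShape {m : Type*} (P Q : Matrix m m ℝ) (i j k l : m) : ℝ :=
  P i l * Q j k + P j l * Q i k

private lemma hpRot {m : Type*} [Fintype m] (Jm P Q : Matrix m m ℝ) (i j k l : m) :
    (∑ α, ∑ β, hpShape P Q i j α β * Jm α k * Jm β l)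
      = hpShape (P * Jm) (Q * Jm) i j k l := by
  have h1 : ∀ α β, hpShape P Q i j α β * Jm α k * Jm β l
      = (Q j α * Jm α k) * (P i β * Jm β l) + (Q i α * Jm α k) * (P j β * Jm β l) := by
    intro α β; simp only [hpShape]; ring
  simp only [h1, Finset.sum_add_distrib]
  simp only [← Finset.sum_mul_sum]
  simp only [hpShape, Matrix.mul_apply]
  all_goals ring

private lemma hpRotSwap {m : Type*} [Fintype m] (Jm P Q : Matrix m m ℝ) (i j k l : m) :
    (∑ α, ∑ β, hpShape P Q i j β α * Jm α k * Jm β l)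
      = hpShape (P * Jm) (Q * Jm) i j l k := by
  have h1 : ∀ α β, hpShape P Q i j β α * Jm α k * Jm β l
      = (P i α * Jm α k) * (Q j β * Jm β l) + (P j α * Jm α k) * (Q i β * Jm β l) := by
    intro α β; simp only [hpShape]; ring
  simp only [h1, Finset.sum_add_distrib]
  simp only [← Finset.sum_mul_sum]
  simp only [hpShape, Matrix.mul_apply]
  all_goals ring

private lemma hpContract {m : Type*} [Fintype m] (Gi P Q : Matrix m m ℝ) (i l : m) :
    (∑ k, ∑ j, Gi k j * hpShape P Q i j k l)
      = (Gi * Q).trace * P i l + (Q * (Gi * P)) i l := by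
  have h1 : ∀ k j, Gi k j * hpShape P Q i j k l
      = P i l * (Gi k j * Q j k) + Q i k * (Gi k j * P j l) := by
    intro k j; simp only [hpShape]; ring
  simp only [h1, Finset.sum_add_distrib, ← Finset.mul_sum, Matrix.trace, Matrix.diag,
    Matrix.mul_apply]
  all_goals ring

private lemma hpContractSwap {m : Type*} [Fintype m] (Gi P Q : Matrix m m ℝ) (i l : m) :
    (∑ k, ∑ j, Gi k j * hpShape P Q i j l k)
      = (P * (Gi * Q)) i l + (Gi * P).trace * Q i l := by
  have h1 : ∀ k j, Gi k j * hpShape P Q i j l k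
      = P i k * (Gi k j * Q j l) + Q i l * (Gi k j * P j k) := by
    intro k j; simp only [hpShape]; ring
  simp only [h1, Finset.sum_add_distrib, ← Finset.mul_sum, Matrix.trace, Matrix.diag,
    Matrix.mul_apply]
  all_goals ring

private lemma hpSwap3 {m : Type*} [Fintype m] (f : m → m → m → ℝ) (c u v : m → ℝ) :
    (∑ α, ∑ β, (∑ r, f r α β * c r) * u α * v β)
      = ∑ r, (∑ α, ∑ β, f r α β * u α * v β) * c r := by
  calc (∑ α, ∑ β, (∑ r, f r α β * c r) * u α * v β)
      = ∑ α, ∑ β, ∑ r, f r α β * u α * v β * c r := by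
        refine Finset.sum_congr rfl fun α _ => Finset.sum_congr rfl fun β _ => ?_
        rw [Finset.sum_mul, Finset.sum_mul]
        exact Finset.sum_congr rfl fun r _ => by ring
    _ = ∑ α, ∑ r, ∑ β, f r α β * u α * v β * c r :=
        Finset.sum_congr rfl fun α _ => Finset.sum_comm
    _ = ∑ r, ∑ α, ∑ β, f r α β * u α * v β * c r := Finset.sum_comm
    _ = ∑ r, (∑ α, ∑ β, f r α β * u α * v β) * c r := by
        refine Finset.sum_congr rfl fun r _ => ?_
        rw [Finset.sum_mul]
        exact Finset.sum_congr rfl fun α _ => by rw [Finset.sum_mul]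
open Matrix

set_option maxHeartbeats 1000000


/-- On a Kähler manifold of dimension `2n ≥ 4`, for a solution `(a_{ij}, λ_i)` of the
h-projective equation, the vector field `λ̄^i = g^{iα} J^β_α λ_β` is a Killing vector
field for `g`; in the lowered form (using that `J` is parallel, so
`λ̄_{i,j} = J^α_i λ_{α,j}`) this reads `λ̄_{i,j} + λ̄_{j,i} = 0`. -/
theorem stmt_11 {M : Type*} {n : ℕ} (hn : 2 ≤ n)
    (g ginv J : M → Fin (2*n) → Fin (2*n) → ℝ)
    (hg_symm : ∀ x i j, g x i j = g x j i)
    (hginv : ∀ x i j, (∑ α, ginv x i α * g x α j) = if i = j then 1 else 0)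
    (hJJ : ∀ x i j, (∑ α, J x i α * J x α j) = -(if i = j then (1:ℝ) else 0))
    (hherm : ∀ x i j, (∑ α, ∑ β, J x α i * g x α β * J x β j) = g x i j)
    (a : M → Fin (2*n) → Fin (2*n) → ℝ) (lam : M → Fin (2*n) → ℝ)
    (ha_symm : ∀ x i j, a x i j = a x j i)
    (ha_herm : ∀ x i j, (∑ α, ∑ β, J x α i * a x α β * J x β j) = a x i j)
    (Da : M → Fin (2*n) → Fin (2*n) → Fin (2*n) → ℝ)
    (hhpr : ∀ x i j k, Da x i j k =
        lam x i * g x j k + lam x j * g x i k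
        - (∑ α, J x α i * lam x α) * (∑ α, g x j α * J x α k)
        - (∑ α, J x α j * lam x α) * (∑ α, g x i α * J x α k))
    (Dlam : M → Fin (2*n) → Fin (2*n) → ℝ)
    (hDlam_symm : ∀ x i j, Dlam x i j = Dlam x j i)
    (Da2 : M → Fin (2*n) → Fin (2*n) → Fin (2*n) → Fin (2*n) → ℝ)
    (hDa2 : ∀ x i j k l, Da2 x i j k l =
        Dlam x i l * g x j k + Dlam x j l * g x i k
        - (∑ α, J x α i * Dlam x α l) * (∑ α, g x j α * J x α k)
        - (∑ α, J x α j * Dlam x α l) * (∑ α, g x i α * J x α k))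
    (R : M → Fin (2*n) → Fin (2*n) → Fin (2*n) → Fin (2*n) → ℝ)
    (hRic : ∀ x i j k l, Da2 x i j k l - Da2 x i j l k =
        (∑ r, R x r i k l * a x r j) + (∑ r, R x r j k l * a x i r))
    (hRJ : ∀ x i j k l, (∑ α, R x i α k l * J x α j) = ∑ α, J x i α * R x α j k l)
    (hRJJ : ∀ x i j k l, (∑ α, ∑ β, R x i j α β * J x α k * J x β l) = R x i j k l) :
    ∀ x i j, (∑ α, J x α i * Dlam x α j) + (∑ α, J x α j * Dlam x α i) = 0 := by
  intro x i0 j0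
  set G : Matrix (Fin (2*n)) (Fin (2*n)) ℝ := Matrix.of (g x) with hG
  set Gi : Matrix (Fin (2*n)) (Fin (2*n)) ℝ := Matrix.of (ginv x) with hGi
  set Jm : Matrix (Fin (2*n)) (Fin (2*n)) ℝ := Matrix.of (J x) with hJm
  set L : Matrix (Fin (2*n)) (Fin (2*n)) ℝ := Matrix.of (Dlam x) with hL
  -- basic matrix identities
  have hGiG : Gi * G = 1 := by
    ext p q
    simp only [Matrix.mul_apply, hGi, hG, Matrix.of_apply, Matrix.one_apply]
    exact hginv x p q
  have hGGi : G * Gi = 1 := mul_eq_one_comm.mp hGiG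
  have hJ2 : Jm * Jm = -1 := by
    ext p q
    simp only [Matrix.mul_apply, hJm, Matrix.of_apply, Matrix.neg_apply, Matrix.one_apply]
    exact hJJ x p q
  have hJt2 : Jmᵀ * Jmᵀ = -1 := by
    have h := congrArg Matrix.transpose hJ2
    rwa [Matrix.transpose_mul, Matrix.transpose_neg, Matrix.transpose_one] at h
  have hHerm : Jmᵀ * G * Jm = G := by
    ext p q
    rw [show G p q = g x p q from rfl, ← hherm x p q]
    simp only [Matrix.mul_apply, Matrix.transpose_apply, hJm, hG, Matrix.of_apply,
      Finset.sum_mul]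
    rw [Finset.sum_comm]
  have cGiG : ∀ A : Matrix (Fin (2*n)) (Fin (2*n)) ℝ, Gi * (G * A) = A := by
    intro A; rw [← mul_assoc, hGiG, one_mul]
  have cGGi : ∀ A : Matrix (Fin (2*n)) (Fin (2*n)) ℝ, G * (Gi * A) = A := by
    intro A; rw [← mul_assoc, hGGi, one_mul]
  have cJt2 : ∀ A : Matrix (Fin (2*n)) (Fin (2*n)) ℝ, Jmᵀ * (Jmᵀ * A) = -A := by
    intro A; rw [← mul_assoc, hJt2, neg_mul, one_mul]
  have hGJ : G * Jm = -(Jmᵀ * G) := by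
    have h : Jmᵀ * G * Jm * Jm = G * Jm := by rw [hHerm]
    rw [mul_assoc (Jmᵀ * G) Jm Jm, hJ2, mul_neg, mul_one] at h
    exact h.symm
  have hJGi : Jm * Gi = -(Gi * Jmᵀ) := by
    calc Jm * Gi = Gi * (G * (Jm * Gi)) := (cGiG _).symm
      _ = Gi * ((G * Jm) * Gi) := by rw [mul_assoc]
      _ = Gi * (-(Jmᵀ * G) * Gi) := by rw [hGJ]
      _ = -(Gi * (Jmᵀ * (G * Gi))) := by rw [neg_mul, mul_neg, mul_assoc]
      _ = -(Gi * Jmᵀ) := by rw [hGGi, mul_one]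
  have cJGi : ∀ A : Matrix (Fin (2*n)) (Fin (2*n)) ℝ, Jm * (Gi * A) = -(Gi * (Jmᵀ * A)) := by
    intro A; rw [← mul_assoc, hJGi, neg_mul, mul_assoc]
  -- product simplifications
  have r4 : (G * Jm) * (Gi * (Jmᵀ * L)) = L := by
    rw [mul_assoc, cJGi, mul_neg, cJt2, mul_neg, mul_neg, neg_neg, cGGi]
  have r5 : (G * Jm) * (Gi * (L * Jm)) = -((Jmᵀ * L) * Jm) := by
    rw [mul_assoc, cJGi, mul_neg, cGGi, ← mul_assoc]
  have r6 : (G * Jm) * Jm = -G := by rw [mul_assoc, hJ2, mul_neg, mul_one]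
  have r9 : (L * Jm) * Jm = -L := by rw [mul_assoc, hJ2, mul_neg, mul_one]
  have tr1 : (Gi * (L * Jm)).trace = -((Gi * (Jmᵀ * L)).trace) := by
    rw [← mul_assoc, Matrix.trace_mul_comm, cJGi, Matrix.trace_neg]
  have tr2 : (Gi * ((Jmᵀ * L) * Jm)).trace = (Gi * L).trace := by
    calc (Gi * ((Jmᵀ * L) * Jm)).trace = ((Gi * (Jmᵀ * L)) * Jm).trace := by rw [← mul_assoc]
      _ = (Jm * (Gi * (Jmᵀ * L))).trace := by rw [Matrix.trace_mul_comm]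
      _ = (-(Gi * (Jmᵀ * (Jmᵀ * L)))).trace := by rw [cJGi]
      _ = (Gi * L).trace := by rw [cJt2, mul_neg, neg_neg]
  -- the decomposition of Da2 into shapes
  have hDa2shape : ∀ i j k l, Da2 x i j k l =
      hpShape L G i j k l - hpShape (Jmᵀ * L) (G * Jm) i j k l := by
    intro i j k l
    rw [hDa2]
    simp only [hpShape, Matrix.mul_apply, Matrix.transpose_apply, hG, hJm, hL,
      Matrix.of_apply]
    ring
  -- the curvature identity: E is invariant under J-rotation in the last two slots
  have hIdent : ∀ i j k l, Da2 x i j k l - Da2 x i j l k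
      = ∑ α, ∑ β, (Da2 x i j α β - Da2 x i j β α) * Jm α k * Jm β l := by
    intro i j k l
    have e : ∀ α β : Fin (2*n), Da2 x i j α β - Da2 x i j β α
        = (∑ r, R x r i α β * a x r j) + (∑ r, R x r j α β * a x i r) :=
      fun α β => hRic x i j α β
    simp only [hJm, Matrix.of_apply]
    rw [hRic x i j k l]
    simp only [e, add_mul, Finset.sum_add_distrib, hpSwap3, hRJJ]
  -- contraction of the identity with ginv
  have expandL : ∀ i l, (∑ k, ∑ j, Gi k j * (Da2 x i j k l - Da2 x i j l k))
      = ((Gi * G).trace • L + G * (Gi * L)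
          - ((Gi * (G * Jm)).trace • (Jmᵀ * L) + (G * Jm) * (Gi * (Jmᵀ * L)))
          - (L * (Gi * G) + (Gi * L).trace • G
             - ((Jmᵀ * L) * (Gi * (G * Jm)) + (Gi * (Jmᵀ * L)).trace • (G * Jm)))) i l := by
    intro i l
    simp only [hDa2shape, mul_sub, Finset.sum_sub_distrib]
    rw [hpContract, hpContract, hpContractSwap, hpContractSwap]
    all_goals simp only [Matrix.add_apply, Matrix.sub_apply, Matrix.smul_apply, smul_eq_mul]
    all_goals ring
  have rotE : ∀ i j k l, (∑ α, ∑ β, (Da2 x i j α β - Da2 x i j β α) * Jm α k * Jm β l)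
      = hpShape (L * Jm) (G * Jm) i j k l - hpShape ((Jmᵀ * L) * Jm) ((G * Jm) * Jm) i j k l
        - (hpShape (L * Jm) (G * Jm) i j l k
           - hpShape ((Jmᵀ * L) * Jm) ((G * Jm) * Jm) i j l k) := by
    intro i j k l
    simp only [hDa2shape, sub_mul, Finset.sum_sub_distrib]
    rw [hpRot, hpRot, hpRotSwap, hpRotSwap]
  have expandR : ∀ i l,
      (∑ k, ∑ j, Gi k j * (∑ α, ∑ β, (Da2 x i j α β - Da2 x i j β α) * Jm α k * Jm β l))
      = ((Gi * (G * Jm)).trace • (L * Jm) + (G * Jm) * (Gi * (L * Jm))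
          - ((Gi * ((G * Jm) * Jm)).trace • ((Jmᵀ * L) * Jm)
             + ((G * Jm) * Jm) * (Gi * ((Jmᵀ * L) * Jm)))
          - ((L * Jm) * (Gi * (G * Jm)) + (Gi * (L * Jm)).trace • (G * Jm)
             - (((Jmᵀ * L) * Jm) * (Gi * ((G * Jm) * Jm))
                + (Gi * ((Jmᵀ * L) * Jm)).trace • ((G * Jm) * Jm)))) i l := by
    intro i l
    simp only [rotE, mul_sub, Finset.sum_sub_distrib]
    rw [hpContract, hpContract, hpContractSwap, hpContractSwap]
    all_goals simp only [Matrix.add_apply, Matrix.sub_apply, Matrix.smul_apply, smul_eq_mul]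
    all_goals ring
  have Meq : ((Gi * G).trace • L + G * (Gi * L)
          - ((Gi * (G * Jm)).trace • (Jmᵀ * L) + (G * Jm) * (Gi * (Jmᵀ * L)))
          - (L * (Gi * G) + (Gi * L).trace • G
             - ((Jmᵀ * L) * (Gi * (G * Jm)) + (Gi * (Jmᵀ * L)).trace • (G * Jm))))
      = ((Gi * (G * Jm)).trace • (L * Jm) + (G * Jm) * (Gi * (L * Jm))
          - ((Gi * ((G * Jm) * Jm)).trace • ((Jmᵀ * L) * Jm)
             + ((G * Jm) * Jm) * (Gi * ((Jmᵀ * L) * Jm)))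
          - ((L * Jm) * (Gi * (G * Jm)) + (Gi * (L * Jm)).trace • (G * Jm)
             - (((Jmᵀ * L) * Jm) * (Gi * ((G * Jm) * Jm))
                + (Gi * ((Jmᵀ * L) * Jm)).trace • ((G * Jm) * Jm)))) := by
    ext i l
    rw [← expandL i l, ← expandR i l]
    exact Finset.sum_congr rfl fun k _ => Finset.sum_congr rfl fun j _ => by
      rw [hIdent i j k l]
  simp only [cGiG, cGGi, hGiG, r4, r5, r6, r9, tr1, tr2, mul_one, one_mul, mul_neg,
    neg_mul, neg_neg, Matrix.trace_neg, Matrix.trace_one, neg_smul, smul_neg,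
    Fintype.card_fin] at Meq
  -- the key linear relation:  τ•(JᵀL) + τ•(LJ) + (ν-2)•(JᵀLJ) - (ν-2)•L = 0
  have key0 : Jm.trace • (Jmᵀ * L) + Jm.trace • (L * Jm)
      + (((2*n : ℕ) : ℝ) - 2) • (Jmᵀ * L * Jm) - (((2*n : ℕ) : ℝ) - 2) • L = 0 := by
    linear_combination (norm := module) -Meq
  simp only [mul_assoc] at key0
  have h2 := congrArg (fun A : Matrix (Fin (2*n)) (Fin (2*n)) ℝ => A * Jm) key0
  simp only [add_mul, sub_mul, smul_mul_assoc, zero_mul, mul_assoc, hJ2, mul_neg, mul_one,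
    smul_neg] at h2
  have key3 : (Jm.trace ^ 2 + (((2*n : ℕ) : ℝ) - 2) ^ 2) • (Jmᵀ * L + L * Jm) = 0 := by
    linear_combination (norm := module) Jm.trace • key0 - ((((2*n : ℕ) : ℝ)) - 2) • h2
  have hne : (Jm.trace ^ 2 + (((2*n : ℕ) : ℝ) - 2) ^ 2) ≠ 0 := by
    have h4 : (4 : ℝ) ≤ ((2*n : ℕ) : ℝ) := by
      exact_mod_cast (by omega : (4:ℕ) ≤ 2*n)
    have : 0 < Jm.trace ^ 2 + (((2*n : ℕ) : ℝ) - 2) ^ 2 := by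
      nlinarith [sq_nonneg Jm.trace]
    exact ne_of_gt this
  have hS0 : Jmᵀ * L + L * Jm = 0 := by
    have h := congrArg
      (fun A : Matrix (Fin (2*n)) (Fin (2*n)) ℝ =>
        (Jm.trace ^ 2 + (((2*n : ℕ) : ℝ) - 2) ^ 2)⁻¹ • A) key3
    simpa only [smul_smul, smul_zero, inv_mul_cancel₀ hne, one_smul] using h
  have e1 : (∑ α, J x α i0 * Dlam x α j0) = (Jmᵀ * L) i0 j0 := by
    simp only [Matrix.mul_apply, Matrix.transpose_apply, hJm, hL, Matrix.of_apply]
  have e2 : (∑ α, J x α j0 * Dlam x α i0) = (L * Jm) i0 j0 := by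
    simp only [Matrix.mul_apply, hJm, hL, Matrix.of_apply]
    exact Finset.sum_congr rfl fun α _ => by rw [hDlam_symm x α i0]; ring
  rw [e1, e2, ← Matrix.add_apply, hS0]
  simp
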